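/- If a candidate triangle (X, α) is contractible via a contraction compatible with α (i.e. there exist h_i : X_i → X_{i−1} with 1 = h_{i+1}d_{i+1} + d_i h_i and α_{i−1}(t h_i) = h_{i+3} α_i), then setting k_i = (−1)^i h_{i+3} α_i : tX_i → X_{i+2}, the identities d_{i+3}k_i − k_{i+1}(t d_{i+1}) = (−1)^i α_i hold for all i. -/
import Mathlib


open CategoryTheory

/-- If a candidate triangle `(X, α)` is contractible via a contraction `h`
compatible with `α` (i.e. `1 = h d + d h` and `α_{i−1} (t h_i) = h_{i+3} α_i`),
then setting `k_i = (−1)^i h_{i+3} α_i : t(X i) ⟶ X (i+2)`, the identities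
`d_{i+3} k_i − k_{i+1} (t d_{i+1}) = (−1)^i α_i` hold for all `i`. -/
theorem stmt4 {A : Type*} [Category A] [Preadditive A]
    (t : A ⥤ A) [t.Additive] [t.IsEquivalence]
    (X : ℤ → A) (d : ∀ i j : ℤ, i + 1 = j → (X i ⟶ X j))
    (hd : ∀ i : ℤ, d i (i+1) rfl ≫ d (i+1) (i+1+1) rfl = 0)
    (α : ∀ i j : ℤ, i + 3 = j → (t.obj (X i) ≅ X j))
    (hnat : ∀ i : ℤ, t.map (d i (i+1) rfl) ≫ (α (i+1) (i+4) (by omega)).hom =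
      (α i (i+3) rfl).hom ≫ d (i+3) (i+4) (by omega))
    (h : ∀ i j : ℤ, j + 1 = i → (X i ⟶ X j))
    (hcontr : ∀ n : ℤ, 𝟙 (X n) = d n (n+1) rfl ≫ h (n+1) n rfl +
        h n (n-1) (by omega) ≫ d (n-1) n (by omega))
    (hα : ∀ i : ℤ, t.map (h (i+1) i rfl) ≫ (α i (i+3) rfl).hom =
        (α (i+1) (i+4) (by omega)).hom ≫ h (i+4) (i+3) (by omega))
    (k : ∀ i j : ℤ, i + 2 = j → (t.obj (X i) ⟶ X j))
    (hk : ∀ i : ℤ, k i (i+2) rfl =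
        ((Int.negOnePow i : ℤˣ) : ℤ) •
          ((α i (i+3) rfl).hom ≫ h (i+3) (i+2) (by omega))) :
    ∀ i : ℤ, k i (i+2) rfl ≫ d (i+2) (i+3) (by omega) -
        t.map (d i (i+1) rfl) ≫ k (i+1) (i+3) (by omega) =
        ((Int.negOnePow i : ℤˣ) : ℤ) • (α i (i+3) rfl).hom := by
  have eqX : ∀ {a b : ℤ}, a = b → X a = X b := fun e => by rw [e]
  have dK2 : ∀ (a b b' : ℤ) (p : a+1=b) (p' : a+1=b'),
      d a b p = d a b' p' ≫ eqToHom (eqX (p'.symm.trans p)) := by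
    intro a b b' p p'; subst p; subst p'; simp
  have dK1 : ∀ (a a' b : ℤ) (p : a+1=b) (p' : a'+1=b),
      d a b p = eqToHom (eqX (show a = a' by omega)) ≫ d a' b p' := by
    intro a a' b p p'
    have e : a = a' := by omega
    subst e; subst p; simp
  have hK1 : ∀ (a a' b : ℤ) (p : b+1=a) (p' : b+1=a'),
      h a b p = eqToHom (eqX (p.symm.trans p')) ≫ h a' b p' := by
    intro a a' b p p'; subst p; subst p'; simp
  have hK2 : ∀ (a b b' : ℤ) (p : b+1=a) (p' : b'+1=a),
      h a b p = h a b' p' ≫ eqToHom (eqX (show b' = b by omega)) := by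
    intro a b b' p p'
    have e : b = b' := by omega
    subst e; subst p; simp
  have kK2 : ∀ (a b b' : ℤ) (p : a+2=b) (p' : a+2=b'),
      k a b p = k a b' p' ≫ eqToHom (eqX (p'.symm.trans p)) := by
    intro a b b' p p'; subst p; subst p'; simp
  have αK2 : ∀ (a b b' : ℤ) (p : a+3=b) (p' : a+3=b'),
      (α a b p).hom = (α a b' p').hom ≫ eqToHom (eqX (p'.symm.trans p)) := by
    intro a b b' p p'; subst p; subst p'; simp
  intro i
  -- normalize the contraction at n = i+3
  have e2 := hcontr (i+3)
  rw [dK2 (i+3) (i+3+1) (i+4) rfl (by omega), hK1 (i+3+1) (i+4) (i+3) rfl (by omega),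
    hK2 (i+3) (i+3-1) (i+2) (by omega) (by omega),
    dK1 (i+3-1) (i+2) (i+3) (by omega) (by omega)] at e2
  simp only [Category.assoc, eqToHom_trans_assoc, eqToHom_refl, Category.id_comp] at e2
  -- normalize hk (i+1)
  have e5 := hk (i+1)
  rw [αK2 (i+1) (i+1+3) (i+4) rfl (by omega),
    hK1 (i+1+3) (i+4) (i+1+2) (by omega) (by omega),
    hK2 (i+4) (i+1+2) (i+3) (by omega) (by omega)] at e5
  simp only [Category.assoc, eqToHom_trans_assoc, eqToHom_refl, Category.id_comp] at e5
  rw [hk i, kK2 (i+1) (i+3) (i+1+2) (by omega) rfl, e5]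
  simp only [Int.negOnePow_succ, Units.val_neg, neg_smul, Preadditive.neg_comp,
    Preadditive.comp_neg, sub_neg_eq_add, Category.assoc, eqToHom_trans, eqToHom_refl,
    Category.comp_id, Preadditive.zsmul_comp, Preadditive.comp_zsmul, ← smul_add]
  congr 1
  rw [← Category.assoc (t.map _), hnat i, Category.assoc, ← Preadditive.comp_add,
    add_comm (h (i+3) (i+2) (by omega) ≫ d (i+2) (i+3) (by omega))
      (d (i+3) (i+4) (by omega) ≫ h (i+4) (i+3) (by omega)), ← e2, Category.comp_id]
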